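/- If z, w ∈ Z[1/√2, i] satisfy |z|² + |w|² = 1 and sde(z, √2) ≥ 1, then sde(z, √2) = sde(w, √2), and setting x = z(√2)^{sde(z)}, y = w(√2)^{sde(w)} ∈ Z[ω], one has gde(|x|², √2) = gde(|y|², √2) ≤ 1. -/
import Mathlib


noncomputable section

open Complex

/-- The eighth root of unity ω = e^{iπ/4}. -/
def omg : ℂ := Complex.exp (Real.pi * Complex.I / 4)

/-- √2 as a complex number. -/
def rt2 : ℂ := (Real.sqrt 2 : ℝ)

/-- Membership in the ring Z[ω] = {a + bω + cω² + dω³ : a,b,c,d ∈ ℤ}. -/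
def Zomega (z : ℂ) : Prop :=
  ∃ a b c d : ℤ, z = a + b * omg + c * omg ^ 2 + d * omg ^ 3

/-- Membership in the ring Z[1/√2, i] = {u/(√2)^n : u ∈ Z[ω], n ∈ ℕ}. -/
def ZRoot2i (z : ℂ) : Prop :=
  ∃ u : ℂ, Zomega u ∧ ∃ n : ℕ, z = u / rt2 ^ n

/-- `b` divides `z` within the ring Z[ω]. -/
def ZDvd (b z : ℂ) : Prop := ∃ q : ℂ, Zomega q ∧ z = b * q

/-- `k` is the greatest dividing exponent of base `b` with respect to `z`:
`b^k` divides `z` in Z[ω], while `b^(k+1)` does not. -/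
def IsGde (b z : ℂ) (k : ℕ) : Prop := ZDvd (b ^ k) z ∧ ¬ ZDvd (b ^ (k + 1)) z

/-- `k` is the smallest denominator exponent of base √2 with respect to `z`:
the smallest integer `k` such that `z·(√2)^k ∈ Z[ω]`. -/
def IsSde (z : ℂ) (k : ℤ) : Prop :=
  Zomega (z * rt2 ^ k) ∧ ∀ j : ℤ, Zomega (z * rt2 ^ j) → k ≤ j

lemma rt2_sq : rt2 ^ 2 = 2 := by
  rw [rt2, ← Complex.ofReal_pow, Real.sq_sqrt (by norm_num : (2:ℝ) ≥ 0)]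
  norm_num

lemma rt2_ne : rt2 ≠ 0 := by
  rw [rt2]
  simp [Real.sqrt_eq_zero']

lemma omg_eq : omg = rt2 / 2 * (1 + I) := by
  rw [omg, show (Real.pi : ℂ) * I / 4 = ((Real.pi/4 : ℝ) : ℂ) * I by push_cast; ring,
    Complex.exp_mul_I, ← Complex.ofReal_cos, ← Complex.ofReal_sin,
    Real.cos_pi_div_four, Real.sin_pi_div_four, rt2]
  push_cast
  ring

lemma omg_sq : omg ^ 2 = I := by
  rw [omg_eq]
  linear_combination ((1+I)^2/4) * rt2_sq + (1/2) * I_sq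

lemma omg_pow4 : omg ^ 4 = -1 := by
  have : omg ^ 4 = (omg ^ 2) ^ 2 := by ring
  rw [this, omg_sq, I_sq]

lemma omg_cube : omg ^ 3 = omg * I := by
  rw [pow_succ, pow_succ, pow_one, ← omg_sq]; ring

lemma rt2_eq : rt2 = omg - omg ^ 3 := by
  rw [omg_cube, omg_eq]
  linear_combination (rt2/2) * I_sq

lemma conj_rt2 : (starRingEnd ℂ) rt2 = rt2 := by
  rw [rt2, Complex.conj_ofReal]

lemma conj_omg : (starRingEnd ℂ) omg = -omg ^ 3 := by
  rw [omg_cube, omg_eq]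
  simp only [map_mul, map_div₀, map_add, map_one, map_ofNat, conj_rt2, Complex.conj_I]
  linear_combination (rt2/2) * I_sq

lemma sqrt2_rat (p q : ℤ) (h : (p:ℝ) + q * Real.sqrt 2 = 0) : p = 0 ∧ q = 0 := by
  by_cases hq : q = 0
  · subst hq; simp at h; exact ⟨by exact_mod_cast h, rfl⟩
  · exfalso
    apply irrational_sqrt_two
    refine ⟨(-p/q : ℚ), ?_⟩
    have hq' : (q:ℝ) ≠ 0 := Int.cast_ne_zero.mpr hq
    push_cast
    field_simp
    linarith [h]

lemma indepZ (a b c d : ℤ) (h : (a:ℂ) + b*omg + c*omg^2 + d*omg^3 = 0) :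
    a = 0 ∧ b = 0 ∧ c = 0 ∧ d = 0 := by
  have hE : (a:ℂ) + b*omg + c*omg^2 + d*omg^3
      = Complex.ofReal ((a:ℝ) + (b-d)*Real.sqrt 2/2) + Complex.ofReal ((c:ℝ) + (b+d)*Real.sqrt 2/2) * I := by
    rw [omg_cube, omg_sq, omg_eq, rt2]
    push_cast
    linear_combination ((d:ℂ) * Real.sqrt 2 / 2) * I_sq
  rw [hE] at h
  have h2 : ((a:ℝ) + (b-d)*Real.sqrt 2/2) = 0 ∧ ((c:ℝ) + (b+d)*Real.sqrt 2/2) = 0 := by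
    constructor
    · have := congrArg Complex.re h; simpa using this
    · have := congrArg Complex.im h; simpa using this
  have e1 : ((2*a : ℤ):ℝ) + ((b-d:ℤ):ℝ) * Real.sqrt 2 = 0 := by push_cast; push_cast at h2; linarith [h2.1]
  have e2 : ((2*c : ℤ):ℝ) + ((b+d:ℤ):ℝ) * Real.sqrt 2 = 0 := by push_cast; push_cast at h2; linarith [h2.2]
  obtain ⟨ha, hbd⟩ := sqrt2_rat _ _ e1
  obtain ⟨hc, hbd'⟩ := sqrt2_rat _ _ e2
  refine ⟨by omega, by omega, by omega, by omega⟩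

lemma rt2_mul (e f g h : ℂ) :
    rt2 * (e + f*omg + g*omg^2 + h*omg^3)
      = (f - h) + (e + g)*omg + (f + h)*omg^2 + (g - e)*omg^3 := by
  rw [rt2_eq]
  linear_combination ((h - f) - g*omg - h*omg^2) * omg_pow4

lemma conj_quad (a b c d : ℂ) :
    (starRingEnd ℂ) ((a:ℂ) + b*omg + c*omg^2 + d*omg^3)
      = (starRingEnd ℂ) a + (-(starRingEnd ℂ) d)*omg + (-(starRingEnd ℂ) c)*omg^2 + (-(starRingEnd ℂ) b)*omg^3 := by
  simp only [map_add, map_mul, map_pow, conj_omg]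
  linear_combination ((starRingEnd ℂ) c * omg^2 - (starRingEnd ℂ) d * omg * (omg^4 - 1)) * omg_pow4

lemma mul_conj_quad (a b c d : ℤ) :
    ((a:ℂ) + b*omg + c*omg^2 + d*omg^3) * (starRingEnd ℂ) ((a:ℂ) + b*omg + c*omg^2 + d*omg^3)
      = ((a^2+b^2+c^2+d^2 : ℤ) : ℂ) + ((a*b+b*c+c*d-d*a : ℤ):ℂ) * rt2 := by
  rw [conj_quad]
  simp only [map_intCast]
  rw [rt2_eq]
  push_cast
  linear_combination (-((b:ℂ)^2+(c:ℂ)^2+(d:ℂ)^2) - ((b:ℂ)*(c:ℂ)+(c:ℂ)*(d:ℂ))*omg - ((b:ℂ)*(d:ℂ))*omg^2) * omg_pow4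

lemma parity_zmod : ∀ a b c d : ZMod 2, ¬(a = c ∧ b = d) → a^2+b^2+c^2+d^2 = 0 → a*b+b*c+c*d-d*a ≠ 0 := by decide

lemma cast_eq_dvd (m n : ℤ) (hmn : ((m : ZMod 2) = (n : ZMod 2))) : 2 ∣ (m - n) := by
  have : ((m - n : ℤ) : ZMod 2) = 0 := by push_cast; rw [hmn]; ring
  exact (ZMod.intCast_zmod_eq_zero_iff_dvd _ 2).mp this

lemma parity (a b c d : ℤ) (h2 : ¬(2 ∣ (a - c) ∧ 2 ∣ (b - d)))
    (hp : 2 ∣ (a^2+b^2+c^2+d^2)) : ¬ 2 ∣ (a*b+b*c+c*d-d*a) := by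
  intro hq
  apply h2
  have hp' : ((a:ZMod 2))^2+(b:ZMod 2)^2+(c:ZMod 2)^2+(d:ZMod 2)^2 = 0 := by
    have := (ZMod.intCast_zmod_eq_zero_iff_dvd _ 2).mpr hp
    push_cast at this; exact this
  have hq' : (a:ZMod 2)*(b:ZMod 2)+(b:ZMod 2)*(c:ZMod 2)+(c:ZMod 2)*(d:ZMod 2)-(d:ZMod 2)*(a:ZMod 2) = 0 := by
    have := (ZMod.intCast_zmod_eq_zero_iff_dvd _ 2).mpr hq
    push_cast at this; exact this
  have hkey : ((a:ZMod 2) = c ∧ (b:ZMod 2) = d) := by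
    by_contra hn
    exact parity_zmod _ _ _ _ hn hp' hq'
  exact ⟨cast_eq_dvd _ _ hkey.1, cast_eq_dvd _ _ hkey.2⟩

lemma gde0 (p q : ℤ) (hp : ¬ 2 ∣ p) : IsGde rt2 ((p:ℂ) + q * rt2) 0 := by
  constructor
  · exact ⟨(p:ℂ) + q * rt2, ⟨p, q, 0, -q, by rw [rt2_eq]; push_cast; ring⟩,
      by rw [pow_zero, one_mul]⟩
  · rintro ⟨t, ⟨e, f, g, h, rfl⟩, heq⟩
    rw [zero_add, pow_one, rt2_mul] at heq
    have h0 : ((p:ℂ)) + (q:ℂ)*omg + 0*omg^2 + (-(q:ℂ))*omg^3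
        = ((f:ℂ)-(h:ℂ)) + ((e:ℂ)+(g:ℂ))*omg + ((f:ℂ)+(h:ℂ))*omg^2 + ((g:ℂ)-(e:ℂ))*omg^3 := by
      rw [rt2_eq] at heq
      linear_combination heq
    have := indepZ (p - (f-h)) (q - (e+g)) (0 - (f+h)) ((-q) - (g-e)) (by push_cast; linear_combination h0)
    omega

lemma gde1 (p q : ℤ) (hp : 2 ∣ p) (hq : ¬ 2 ∣ q) : IsGde rt2 ((p:ℂ) + q * rt2) 1 := by
  obtain ⟨p', rfl⟩ := hp
  constructor
  · refine ⟨(q:ℂ) + p'*omg + 0*omg^2 + (-p')*omg^3, ⟨q, p', 0, -p', by push_cast; ring⟩, ?_⟩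
    rw [pow_one, rt2_mul, rt2_eq]
    push_cast
    ring
  · rintro ⟨t, ⟨e, f, g, h, rfl⟩, heq⟩
    rw [rt2_sq] at heq
    have h0 : (2*(p':ℂ)) + (q:ℂ)*omg + 0*omg^2 + (-(q:ℂ))*omg^3
        = (2*(e:ℂ)) + (2*(f:ℂ))*omg + (2*(g:ℂ))*omg^2 + (2*(h:ℂ))*omg^3 := by
      rw [rt2_eq] at heq
      push_cast at heq
      linear_combination heq
    have := indepZ (2*p' - 2*e) (q - 2*f) (0 - 2*g) ((-q) - 2*h) (by push_cast; linear_combination h0)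
    omega

lemma sde_parity (z : ℂ) (k : ℤ) (a b c d : ℤ) (hx : z * rt2 ^ k = (a:ℂ) + b*omg + c*omg^2 + d*omg^3)
    (hmin : ∀ j : ℤ, Zomega (z * rt2 ^ j) → k ≤ j) :
    ¬(2 ∣ (a - c) ∧ 2 ∣ (b - d)) := by
  rintro ⟨⟨s, hs⟩, ⟨t, ht⟩⟩
  have hlt : ¬ (k ≤ k - 1) := by omega
  apply hlt
  apply hmin (k - 1)
  refine ⟨t, c + s, d + t, -s, ?_⟩
  apply mul_right_cancel₀ rt2_ne
  have hzp : z * rt2 ^ (k - 1) * rt2 = z * rt2 ^ k := by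
    rw [mul_assoc]
    congr 1
    rw [← zpow_add_one₀ rt2_ne]
    congr 1
    omega
  rw [hzp, hx, mul_comm _ rt2, rt2_mul]
  have hsC : (a:ℂ) = c + 2*s := by exact_mod_cast congrArg (Int.cast : ℤ → ℂ) (by omega : a = c + 2*s)
  have htC : (b:ℂ) = d + 2*t := by exact_mod_cast congrArg (Int.cast : ℤ → ℂ) (by omega : b = d + 2*t)
  push_cast
  linear_combination hsC + omg * htC

/-- If |z|² + |w|² = 1 and sde(z, √2) ≥ 1, then sde(z) = sde(w) and, for
x = z(√2)^{sde z}, y = w(√2)^{sde w}, one has gde(|x|², √2) = gde(|y|², √2) ≤ 1. -/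
theorem stmt9 (z w : ℂ) (hz : ZRoot2i z) (hw : ZRoot2i w)
    (hunit : z * (starRingEnd ℂ) z + w * (starRingEnd ℂ) w = 1)
    (kz kw : ℤ) (hkz : IsSde z kz) (hkw : IsSde w kw) (h1 : 1 ≤ kz) :
    kz = kw ∧
      ∃ j : ℕ, j ≤ 1 ∧
        IsGde rt2 ((z * rt2 ^ kz) * (starRingEnd ℂ) (z * rt2 ^ kz)) j ∧
        IsGde rt2 ((w * rt2 ^ kw) * (starRingEnd ℂ) (w * rt2 ^ kw)) j := by
  obtain ⟨hxz, hminz⟩ := hkz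
  obtain ⟨hxw, hminw⟩ := hkw
  obtain ⟨a₁, b₁, c₁, d₁, hx⟩ := hxz
  obtain ⟨a₂, b₂, c₂, d₂, hy⟩ := hxw
  set P1 : ℤ := a₁^2+b₁^2+c₁^2+d₁^2 with hP1
  set Q1 : ℤ := a₁*b₁+b₁*c₁+c₁*d₁-d₁*a₁ with hQ1
  set P2 : ℤ := a₂^2+b₂^2+c₂^2+d₂^2 with hP2
  set Q2 : ℤ := a₂*b₂+b₂*c₂+c₂*d₂-d₂*a₂ with hQ2
  have hpar1 := sde_parity z kz a₁ b₁ c₁ d₁ hx hminz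
  have hpar2 := sde_parity w kw a₂ b₂ c₂ d₂ hy hminw
  have hxx : (z * rt2 ^ kz) * (starRingEnd ℂ) (z * rt2 ^ kz) = (P1:ℂ) + (Q1:ℂ) * rt2 := by
    rw [hx]; exact mul_conj_quad a₁ b₁ c₁ d₁
  have hyy : (w * rt2 ^ kw) * (starRingEnd ℂ) (w * rt2 ^ kw) = (P2:ℂ) + (Q2:ℂ) * rt2 := by
    rw [hy]; exact mul_conj_quad a₂ b₂ c₂ d₂
  -- pass to powers of 2
  have hconjpow : ∀ k : ℤ, (starRingEnd ℂ) (rt2 ^ k) = rt2 ^ k := by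
    intro k; rw [map_zpow₀, conj_rt2]
  have h2z : ∀ k : ℤ, (2:ℂ) ^ k = rt2 ^ k * rt2 ^ k := by
    intro k; rw [← rt2_sq, sq, mul_zpow]
  have hzz2 : (z * (starRingEnd ℂ) z) * (2:ℂ) ^ kz = (P1:ℂ) + (Q1:ℂ) * rt2 := by
    rw [h2z, ← hxx, map_mul, hconjpow]; ring
  have hww2 : (w * (starRingEnd ℂ) w) * (2:ℂ) ^ kw = (P2:ℂ) + (Q2:ℂ) * rt2 := by
    rw [h2z, ← hyy, map_mul, hconjpow]; ring
  set Nz : ℤ := max kz kw with hNz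
  set m : ℕ := (Nz - kz).toNat with hm
  set n : ℕ := (Nz - kw).toNat with hn
  set M : ℕ := Nz.toNat with hM
  have hmz : (m:ℤ) = Nz - kz := by rw [hm]; omega
  have hnz : (n:ℤ) = Nz - kw := by rw [hn]; omega
  have hMz : (M:ℤ) = Nz := by rw [hM]; omega
  have two_ne : (2:ℂ) ≠ 0 := two_ne_zero
  have hA : (z * (starRingEnd ℂ) z) * (2:ℂ) ^ (M:ℕ) = ((P1:ℂ) + (Q1:ℂ) * rt2) * 2 ^ (m:ℕ) := by
    have hsplit : (2:ℂ) ^ (M:ℕ) = (2:ℂ) ^ kz * (2:ℂ) ^ (m:ℕ) := by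
      rw [← zpow_natCast (2:ℂ) M, ← zpow_natCast (2:ℂ) m, ← zpow_add₀ two_ne]
      congr 1; omega
    rw [hsplit, ← mul_assoc, hzz2]
  have hB : (w * (starRingEnd ℂ) w) * (2:ℂ) ^ (M:ℕ) = ((P2:ℂ) + (Q2:ℂ) * rt2) * 2 ^ (n:ℕ) := by
    have hsplit : (2:ℂ) ^ (M:ℕ) = (2:ℂ) ^ kw * (2:ℂ) ^ (n:ℕ) := by
      rw [← zpow_natCast (2:ℂ) M, ← zpow_natCast (2:ℂ) n, ← zpow_add₀ two_ne]
      congr 1; omega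
    rw [hsplit, ← mul_assoc, hww2]
  have key : ((P1:ℂ) + (Q1:ℂ) * rt2) * 2 ^ m + ((P2:ℂ) + (Q2:ℂ) * rt2) * 2 ^ n = 2 ^ M := by
    rw [← hA, ← hB, ← add_mul, hunit, one_mul]
  have hPQ := indepZ (P1 * 2^m + P2 * 2^n - 2^M) (Q1 * 2^m + Q2 * 2^n) 0 (-(Q1 * 2^m + Q2 * 2^n))
    (by push_cast; rw [rt2_eq] at key; linear_combination key)
  have hP : P1 * 2^m + P2 * 2^n = 2^M := by omega
  have hQ : Q1 * 2^m + Q2 * 2^n = 0 := by omega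
  -- integer endgame
  have hMpos : 1 ≤ M := by omega
  have hdM : (2:ℤ) ∣ 2^M := dvd_pow_self 2 (by omega)
  have hkzkw : kz = kw := by
    by_contra hne
    rcases lt_or_gt_of_ne hne with hlt | hgt
    · -- kz < kw : n = 0, m ≥ 1
      have hn0 : n = 0 := by omega
      have hm1 : 1 ≤ m := by omega
      have hd1 : (2:ℤ) ∣ P1 * 2^m := Dvd.dvd.mul_left (dvd_pow_self 2 (by omega)) P1
      have hd2 : (2:ℤ) ∣ Q1 * 2^m := Dvd.dvd.mul_left (dvd_pow_self 2 (by omega)) Q1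
      rw [hn0] at hP hQ
      simp only [pow_zero, mul_one] at hP hQ
      have hp2 : 2 ∣ P2 := by omega
      exact parity _ _ _ _ hpar2 hp2 (by omega)
    · have hn1 : 1 ≤ n := by omega
      have hm0 : m = 0 := by omega
      have hd1 : (2:ℤ) ∣ P2 * 2^n := Dvd.dvd.mul_left (dvd_pow_self 2 (by omega)) P2
      have hd2 : (2:ℤ) ∣ Q2 * 2^n := Dvd.dvd.mul_left (dvd_pow_self 2 (by omega)) Q2
      rw [hm0] at hP hQ
      simp only [pow_zero, mul_one] at hP hQ
      have hp1 : 2 ∣ P1 := by omega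
      exact parity _ _ _ _ hpar1 hp1 (by omega)
  refine ⟨hkzkw, ?_⟩
  have hm0 : m = 0 := by omega
  have hn0 : n = 0 := by omega
  rw [hm0, hn0] at hP hQ
  simp only [pow_zero, mul_one] at hP hQ
  by_cases hp : 2 ∣ P1
  · have hp2 : 2 ∣ P2 := by omega
    exact ⟨1, le_refl 1, by rw [hxx]; exact gde1 P1 Q1 hp (parity _ _ _ _ hpar1 hp),
      by rw [hyy]; exact gde1 P2 Q2 hp2 (parity _ _ _ _ hpar2 hp2)⟩
  · have hp2 : ¬ 2 ∣ P2 := by omega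
    exact ⟨0, by omega, by rw [hxx]; exact gde0 P1 Q1 hp, by rw [hyy]; exact gde0 P2 Q2 hp2⟩
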